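/- A topological space (X, 𝒯) is a LOTS (i.e., there exists a linear order < on X whose order topology equals 𝒯) if and only if there exist two interlocking nests 𝓛 and 𝓡 of open subsets of X such that 𝓛 ∪ 𝓡 T₁-separates X and 𝓛 ∪ 𝓡 is a subbasis for 𝒯. -/

import Mathlib

open Topology

/-- A nest on `X`: a family of subsets linearly ordered by inclusion. -/
def IsNest {X : Type*} (𝓛 : Set (Set X)) : Prop :=
  ∀ M ∈ 𝓛, ∀ N ∈ 𝓛, M ⊆ N ∨ N ⊆ M

/-- `𝓢` T₁-separates `X`. -/
def T1Sep {X : Type*} (𝓢 : Set (Set X)) : Prop :=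
  ∀ x y : X, x ≠ y → ∃ L ∈ 𝓢, ∃ L' ∈ 𝓢, (x ∈ L ∧ y ∉ L) ∧ (y ∈ L' ∧ x ∉ L')

/-- `𝓛` is interlocking. -/
def Interlocking {X : Type*} (𝓛 : Set (Set X)) : Prop :=
  ∀ L ∈ 𝓛, L = ⋂₀ {N | N ∈ 𝓛 ∧ L ⊆ N ∧ L ≠ N} →
    L = ⋃₀ {N | N ∈ 𝓛 ∧ N ⊆ L ∧ L ≠ N}

/-- The order topology of a relation `R`: generated by the rays
`{x | R x a}` and `{x | R a x}`, `a ∈ X`. -/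
def orderTopologyOf {X : Type*} (R : X → X → Prop) : TopologicalSpace X :=
  TopologicalSpace.generateFrom
    ({S | ∃ a, S = {x | R x a}} ∪ {S | ∃ a, S = {x | R a x}})

/-- `(X, t)` is a LOTS: some linear order on `X` induces the topology `t`. -/
def IsLOTS {X : Type*} (t : TopologicalSpace X) : Prop :=
  ∃ _ : LinearOrder X, t = orderTopologyOf (fun a b : X => a < b)

open TopologicalSpace in
/-- The hard (van Dalen–Wattel) direction: two interlocking nests whose union
T₁-separates give rise to a compatible linear order. -/
lemma vdw_backward {X : Type*} (𝓛 𝓡 : Set (Set X)) (hL : IsNest 𝓛) (hR : IsNest 𝓡)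
    (iL : Interlocking 𝓛) (iR : Interlocking 𝓡) (hT1 : T1Sep (𝓛 ∪ 𝓡)) :
    IsLOTS (TopologicalSpace.generateFrom (𝓛 ∪ 𝓡)) := by
  classical
  set r : X → X → Prop := fun x y => ∃ R ∈ 𝓡, y ∈ R ∧ x ∉ R with hrdef
  have hirr : ∀ x, ¬ r x x := by rintro x ⟨R, _, hy, hx⟩; exact hx hy
  -- converting between 𝓛-witnesses and 𝓡-witnesses of separation
  have conv1 : ∀ {x y}, (∃ L ∈ 𝓛, x ∈ L ∧ y ∉ L) → r x y := by
    rintro x y ⟨L, hLm, hxL, hyL⟩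
    have hxy : x ≠ y := fun e => hyL (e ▸ hxL)
    obtain ⟨S, hS, S', hS', ⟨hxS, hyS⟩, hyS', hxS'⟩ := hT1 x y hxy
    rcases hS' with h | h
    · rcases hL L hLm S' h with hsub | hsub
      · exact absurd (hsub hxL) hxS'
      · exact absurd (hsub hyS') hyL
    · exact ⟨S', h, hyS', hxS'⟩
  have conv2 : ∀ {x y}, r x y → ∃ L ∈ 𝓛, x ∈ L ∧ y ∉ L := by
    rintro x y ⟨R, hRm, hyR, hxR⟩
    have hxy : x ≠ y := fun e => hxR (e ▸ hyR)
    obtain ⟨S, hS, S', hS', ⟨hxS, hyS⟩, hyS', hxS'⟩ := hT1 x y hxy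
    rcases hS with h | h
    · exact ⟨S, h, hxS, hyS⟩
    · rcases hR R hRm S h with hsub | hsub
      · exact absurd (hsub hyR) hyS
      · exact absurd (hsub hxS) hxR
  have htrans : ∀ {x y z}, r x y → r y z → r x z := by
    rintro x y z ⟨R1, h1, hyR1, hxR1⟩ ⟨R2, h2, hzR2, hyR2⟩
    rcases hR R1 h1 R2 h2 with hsub | hsub
    · exact absurd (hsub hyR1) hyR2
    · exact ⟨R2, h2, hzR2, fun hx => hxR1 (hsub hx)⟩
  have htot : ∀ {x y : X}, x ≠ y → r x y ∨ r y x := by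
    intro x y hxy
    obtain ⟨S, hS, S', hS', ⟨hxS, hyS⟩, hyS', hxS'⟩ := hT1 x y hxy
    rcases hS with h | h
    · exact Or.inl (conv1 ⟨S, h, hxS, hyS⟩)
    · exact Or.inr ⟨S, h, hxS, hyS⟩
  -- members of 𝓛 are initial segments, members of 𝓡 are final segments
  have dc : ∀ L ∈ 𝓛, ∀ {x y}, r x y → y ∈ L → x ∈ L := by
    intro L hLm x y hxy hyL
    obtain ⟨L', hL'm, hxL', hyL'⟩ := conv2 hxy
    rcases hL L hLm L' hL'm with hsub | hsub
    · exact absurd (hsub hyL) hyL'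
    · exact hsub hxL'
  have uc : ∀ R ∈ 𝓡, ∀ {x y}, r x y → x ∈ R → y ∈ R := by
    intro R hRm x y hxy hxR
    obtain ⟨R', hR'm, hyR', hxR'⟩ := hxy
    rcases hR R hRm R' hR'm with hsub | hsub
    · exact absurd (hsub hxR) hxR'
    · exact hsub hyR'
  haveI : IsTrans X r := ⟨fun _ _ _ => htrans⟩
  haveI : IsIrrefl X r := ⟨hirr⟩
  haveI : IsTrichotomous X r := ⟨fun x y => by
    by_cases h : x = y
    · exact fun _ _ => h
    · rcases htot h with h' | h'
      · exact fun h1 _ => absurd h' h1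
      · exact fun _ h2 => absurd h' h2⟩
  haveI : IsStrictTotalOrder X r := {}
  haveI : DecidableRel r := fun _ _ => Classical.dec _
  letI lo : LinearOrder X := linearOrderOfSTO r
  refine ⟨lo, ?_⟩
  show generateFrom (𝓛 ∪ 𝓡) =
    generateFrom ({S | ∃ a, S = {x | r x a}} ∪ {S | ∃ a, S = {x | r a x}})
  -- 𝓛-members are open in the order topology
  set τ : TopologicalSpace X :=
    generateFrom ({S | ∃ a, S = {x | r x a}} ∪ {S | ∃ a, S = {x | r a x}}) with hτ
  have openL : ∀ L ∈ 𝓛, IsOpen[τ] L := by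
    intro L hLm
    have key : ∀ x ∈ L, ∃ U, IsOpen[τ] U ∧ x ∈ U ∧ U ⊆ L := by
      intro x hxL
      by_cases h1 : ∃ z ∈ L, r x z
      · obtain ⟨z, hzL, hxz⟩ := h1
        exact ⟨{w | r w z}, isOpen_generateFrom_of_mem (Or.inl ⟨z, rfl⟩), hxz,
          fun w hw => dc L hLm hw hzL⟩
      · by_cases h2 : ∃ y, r x y
        · by_cases h3 : ∃ y, r x y ∧ ∀ w, ¬ (r x w ∧ r w y)
          · obtain ⟨y, hxy, hy⟩ := h3
            refine ⟨{w | r w y}, isOpen_generateFrom_of_mem (Or.inl ⟨y, rfl⟩), hxy, ?_⟩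
            intro w hw
            by_cases hwx : w = x
            · exact hwx ▸ hxL
            · rcases htot hwx with h' | h'
              · exact dc L hLm h' hxL
              · exact absurd ⟨h', hw⟩ (hy w)
          · exfalso
            push_neg at h3
            have hint : L = ⋂₀ {N | N ∈ 𝓛 ∧ L ⊆ N ∧ L ≠ N} := by
              apply Set.Subset.antisymm
              · intro a ha N hN
                exact hN.2.1 ha
              · intro y hy
                by_contra hyL
                have hxy : r x y := by
                  rcases htot (show x ≠ y from fun e => hyL (e ▸ hxL)) with h' | h'
                  · exact h'
                  · exact absurd (dc L hLm h' hxL) hyL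
                obtain ⟨w, hxw, hwy⟩ := h3 y hxy
                have hwL : w ∉ L := fun hwL => h1 ⟨w, hwL, hxw⟩
                obtain ⟨N, hNm, hwN, hyN⟩ := conv2 hwy
                have hLN : L ⊆ N := by
                  rcases hL N hNm L hLm with hsub | hsub
                  · exact absurd (hsub hwN) hwL
                  · exact hsub
                exact hyN (hy N ⟨hNm, hLN, fun e => hwL (e ▸ hwN)⟩)
            have hun := iL L hLm hint
            have hx' : x ∈ ⋃₀ {N | N ∈ 𝓛 ∧ N ⊆ L ∧ L ≠ N} := hun ▸ hxL
            obtain ⟨N, ⟨hNm, hNL, hne'⟩, hxN⟩ := hx'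
            have hnsub : ¬ L ⊆ N := fun hsub => hne' (Set.Subset.antisymm hsub hNL)
            obtain ⟨z, hzL, hzN⟩ := Set.not_subset.1 hnsub
            exact h1 ⟨z, hzL, conv1 ⟨N, hNm, hxN, hzN⟩⟩
        · refine ⟨Set.univ, isOpen_univ, trivial, ?_⟩
          intro y _
          by_cases hyx : y = x
          · exact hyx ▸ hxL
          · rcases htot hyx with h' | h'
            · exact dc L hLm h' hxL
            · exact absurd ⟨y, h'⟩ h2
    have hLeq : L = ⋃₀ {U | IsOpen[τ] U ∧ U ⊆ L} := by
      apply Set.Subset.antisymm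
      · intro x hx
        obtain ⟨U, h1, h2, h3⟩ := key x hx
        exact ⟨U, ⟨h1, h3⟩, h2⟩
      · rintro x ⟨U, ⟨_, hUL⟩, hxU⟩
        exact hUL hxU
    rw [hLeq]
    exact isOpen_sUnion fun U hU => hU.1
  have openR : ∀ R ∈ 𝓡, IsOpen[τ] R := by
    intro R hRm
    have key : ∀ x ∈ R, ∃ U, IsOpen[τ] U ∧ x ∈ U ∧ U ⊆ R := by
      intro x hxR
      by_cases h1 : ∃ z ∈ R, r z x
      · obtain ⟨z, hzR, hzx⟩ := h1
        exact ⟨{w | r z w}, isOpen_generateFrom_of_mem (Or.inr ⟨z, rfl⟩), hzx,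
          fun w hw => uc R hRm hw hzR⟩
      · by_cases h2 : ∃ y, r y x
        · by_cases h3 : ∃ y, r y x ∧ ∀ w, ¬ (r y w ∧ r w x)
          · obtain ⟨y, hyx, hy⟩ := h3
            refine ⟨{w | r y w}, isOpen_generateFrom_of_mem (Or.inr ⟨y, rfl⟩), hyx, ?_⟩
            intro w hw
            by_cases hwx : w = x
            · exact hwx ▸ hxR
            · rcases htot hwx with h' | h'
              · exact absurd ⟨hw, h'⟩ (hy w)
              · exact uc R hRm h' hxR
          · exfalso
            push_neg at h3
            have hint : R = ⋂₀ {N | N ∈ 𝓡 ∧ R ⊆ N ∧ R ≠ N} := by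
              apply Set.Subset.antisymm
              · intro a ha N hN
                exact hN.2.1 ha
              · intro y hy
                by_contra hyR
                have hyx : r y x := by
                  rcases htot (show y ≠ x from fun e => hyR (e ▸ hxR)) with h' | h'
                  · exact h'
                  · exact absurd (uc R hRm h' hxR) hyR
                obtain ⟨w, hyw, hwx⟩ := h3 y hyx
                have hwR : w ∉ R := fun hwR => h1 ⟨w, hwR, hwx⟩
                obtain ⟨N, hNm, hwN, hyN⟩ := hyw
                have hRN : R ⊆ N := by
                  rcases hR N hNm R hRm with hsub | hsub
                  · exact absurd (hsub hwN) hwR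
                  · exact hsub
                exact hyN (hy N ⟨hNm, hRN, fun e => hwR (e ▸ hwN)⟩)
            have hun := iR R hRm hint
            have hx' : x ∈ ⋃₀ {N | N ∈ 𝓡 ∧ N ⊆ R ∧ R ≠ N} := hun ▸ hxR
            obtain ⟨N, ⟨hNm, hNR, hne'⟩, hxN⟩ := hx'
            have hnsub : ¬ R ⊆ N := fun hsub => hne' (Set.Subset.antisymm hsub hNR)
            obtain ⟨z, hzR, hzN⟩ := Set.not_subset.1 hnsub
            exact h1 ⟨z, hzR, ⟨N, hNm, hxN, hzN⟩⟩
        · refine ⟨Set.univ, isOpen_univ, trivial, ?_⟩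
          intro y _
          by_cases hyx : y = x
          · exact hyx ▸ hxR
          · rcases htot hyx with h' | h'
            · exact absurd ⟨y, h'⟩ h2
            · exact uc R hRm h' hxR
    have hReq : R = ⋃₀ {U | IsOpen[τ] U ∧ U ⊆ R} := by
      apply Set.Subset.antisymm
      · intro x hx
        obtain ⟨U, h1, h2, h3⟩ := key x hx
        exact ⟨U, ⟨h1, h3⟩, h2⟩
      · rintro x ⟨U, ⟨_, hUR⟩, hxU⟩
        exact hUR hxU
    rw [hReq]
    exact isOpen_sUnion fun U hU => hU.1
  refine le_antisymm (le_generateFrom_iff_subset_isOpen.2 ?_)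
    (le_generateFrom_iff_subset_isOpen.2 ?_)
  · rintro S (⟨a, rfl⟩ | ⟨a, rfl⟩)
    · have hSeq : {x | r x a} = ⋃₀ {L | L ∈ 𝓛 ∧ a ∉ L} := by
        ext w
        constructor
        · intro hw
          obtain ⟨N, hNm, hwN, haN⟩ := conv2 hw
          exact ⟨N, ⟨hNm, haN⟩, hwN⟩
        · rintro ⟨N, ⟨hNm, haN⟩, hwN⟩
          exact conv1 ⟨N, hNm, hwN, haN⟩
      show IsOpen[generateFrom (𝓛 ∪ 𝓡)] {x | r x a}
      rw [hSeq]
      exact @isOpen_sUnion X (generateFrom (𝓛 ∪ 𝓡)) _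
        fun N hN => isOpen_generateFrom_of_mem (Or.inl hN.1)
    · have hSeq : {x | r a x} = ⋃₀ {R | R ∈ 𝓡 ∧ a ∉ R} := by
        ext w
        constructor
        · rintro ⟨N, hNm, hwN, haN⟩
          exact ⟨N, ⟨hNm, haN⟩, hwN⟩
        · rintro ⟨N, ⟨hNm, haN⟩, hwN⟩
          exact ⟨N, hNm, hwN, haN⟩
      show IsOpen[generateFrom (𝓛 ∪ 𝓡)] {x | r a x}
      rw [hSeq]
      exact @isOpen_sUnion X (generateFrom (𝓛 ∪ 𝓡)) _
        fun N hN => isOpen_generateFrom_of_mem (Or.inr hN.1)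
  · rintro S (hS | hS)
    · exact openL S hS
    · exact openR S hS

theorem isLOTS_iff_interlocking_nests {X : Type*} (t : TopologicalSpace X) :
    IsLOTS t ↔
      ∃ 𝓛 𝓡 : Set (Set X), IsNest 𝓛 ∧ IsNest 𝓡 ∧
        Interlocking 𝓛 ∧ Interlocking 𝓡 ∧
        (∀ L ∈ 𝓛 ∪ 𝓡, IsOpen[t] L) ∧ T1Sep (𝓛 ∪ 𝓡) ∧
        t = TopologicalSpace.generateFrom (𝓛 ∪ 𝓡) := by
  constructor
  · rintro ⟨lo, rfl⟩
    refine ⟨{S | ∃ a, S = {x | x < a}}, {S | ∃ a, S = {x | a < x}}, ?_, ?_, ?_, ?_, ?_, ?_, ?_⟩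
    · rintro M ⟨a, rfl⟩ N ⟨b, rfl⟩
      rcases le_total a b with h | h
      · exact Or.inl fun x hx => lt_of_lt_of_le hx h
      · exact Or.inr fun x hx => lt_of_lt_of_le hx h
    · rintro M ⟨a, rfl⟩ N ⟨b, rfl⟩
      rcases le_total a b with h | h
      · exact Or.inr fun x hx => lt_of_le_of_lt h hx
      · exact Or.inl fun x hx => lt_of_le_of_lt h hx
    · rintro L ⟨a, rfl⟩ hI
      exfalso
      have ha : a ∈ ⋂₀ {N | N ∈ {S | ∃ a, S = {x | x < a}} ∧ {x | x < a} ⊆ N ∧ {x | x < a} ≠ N} := by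
        rintro N ⟨⟨b, rfl⟩, hsub, hne⟩
        show a < b
        by_contra hab
        push_neg at hab
        exact hne (Set.Subset.antisymm hsub fun x hx => lt_of_lt_of_le hx hab)
      rw [← hI] at ha
      exact lt_irrefl a ha
    · rintro L ⟨a, rfl⟩ hI
      exfalso
      have ha : a ∈ ⋂₀ {N | N ∈ {S | ∃ a, S = {x | a < x}} ∧ {x | a < x} ⊆ N ∧ {x | a < x} ≠ N} := by
        rintro N ⟨⟨b, rfl⟩, hsub, hne⟩
        show b < a
        by_contra hab
        push_neg at hab
        exact hne (Set.Subset.antisymm hsub fun x hx => lt_of_le_of_lt hab hx)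
      rw [← hI] at ha
      exact lt_irrefl a ha
    · intro L hLm
      exact TopologicalSpace.isOpen_generateFrom_of_mem hLm
    · intro x y hxy
      rcases hxy.lt_or_gt with h | h
      · exact ⟨{z | z < y}, Or.inl ⟨y, rfl⟩, {z | x < z}, Or.inr ⟨x, rfl⟩,
          ⟨h, lt_irrefl y⟩, h, lt_irrefl x⟩
      · exact ⟨{z | y < z}, Or.inr ⟨y, rfl⟩, {z | z < x}, Or.inl ⟨x, rfl⟩,
          ⟨h, lt_irrefl y⟩, h, lt_irrefl x⟩
    · rfl
  · rintro ⟨𝓛, 𝓡, hL, hR, iL, iR, _, hT1, rfl⟩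
    exact vdw_backward 𝓛 𝓡 hL hR iL iR hT1
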